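/- (Jacobian of a two-segment broken disto-line.) Let ℓ ≥ 1, fix τ ∈ ℝ, and let (a₁,b₁), (c,d), (ĉ,d̂) ∈ ℝ² with a₁ ≠ 0, c ≠ 0, ĉ ≠ 0 and Δ_ℓ((c,d);(a₁,b₁)) ≠ 0. For (t,s) ∈ ℝ² define t₁ := f_{1/ℓ}( f_ℓ(a₁) Δ_ℓ((c,d);(t,s)) / Δ_ℓ((c,d);(a₁,b₁)) ), τ₁ := (t − t₁)/c, s₁ := s + (d/f_ℓ(c))(f_ℓ(t₁) − f_ℓ(t)), t₂ := t₁ + ĉ(τ − τ₁), s₂ := s₁ + (d̂/f_ℓ(ĉ))(f_ℓ(t₂) − f_ℓ(t₁)). Then at every point (t,s) with Δ_ℓ((c,d);(t,s)) ≠ 0, the map (t,s) ↦ (t₂,s₂) is differentiable and its Jacobian determinant equals the constant δ := −|ĉ|^{1−ℓ} |c|^{ℓ−1} · Δ_ℓ((ĉ,d̂);(a₁,b₁)) / Δ_ℓ((c,d);(a₁,b₁)). -/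

import Mathlib

open MeasureTheory Real Set

noncomputable section

/-- `f_ℓ(σ) = σ|σ|^{ℓ-1}`. -/
def fl (l : ℝ) (σ : ℝ) : ℝ := σ * |σ| ^ (l - 1)

/-- The disto-scalar product `⟨v|w⟩_ℓ`. -/
def distoDot (l : ℝ) (v w : ℝ × ℝ) : ℝ := fl l v.1 * fl l w.1 + v.2 * w.2

/-- The distorted determinant `Δ_ℓ(v;w)`. -/
def distoDet (l : ℝ) (v w : ℝ × ℝ) : ℝ := fl l v.1 * w.2 - v.2 * fl l w.1

/-- The quasihomogeneous gauge `ρ(t,s)`. -/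
def qgauge (l : ℝ) (p : ℝ × ℝ) : ℝ := (|p.1| ^ (2 * l) + p.2 ^ 2) ^ (1 / (2 * l))

/-- First coordinate of the disto-line through `(t,s)` parallel to `(c,d)` with speed `ϱ`. -/
def lineT (ϱ t : ℝ) (τ : ℝ) : ℝ := t + ϱ * τ

/-- Second coordinate of the disto-line through `(t,s)` parallel to `(c,d)` with speed `ϱ`. -/
def lineS (l c d ϱ t s : ℝ) (τ : ℝ) : ℝ := s + d / fl l c * (fl l (t + ϱ * τ) - fl l t)


/-- Jacobian determinant of a map `ℝ² → ℝ²` at a point. -/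
def jac2 (F : ℝ × ℝ → ℝ × ℝ) (p : ℝ × ℝ) : ℝ :=
  (fderiv ℝ F p (1, 0)).1 * (fderiv ℝ F p (0, 1)).2
    - (fderiv ℝ F p (1, 0)).2 * (fderiv ℝ F p (0, 1)).1

/-- Position at total time `τ` along a two-segment broken disto-line: first segment through
`(t,s)` parallel to `(c,d)` (with `t`-speed `−c`) up to the disto-ray through `(a₁,b₁)`,
then a segment parallel to `(ĉ,d̂)`. -/
def brokenMap2 (l τ a₁ b₁ c d chat dhat : ℝ) (p : ℝ × ℝ) : ℝ × ℝ :=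
  let t₁ := fl (1 / l) (fl l a₁ * distoDet l (c, d) p / distoDet l (c, d) (a₁, b₁))
  let τ₁ := (p.1 - t₁) / c
  let s₁ := p.2 + d / fl l c * (fl l t₁ - fl l p.1)
  let t₂ := t₁ + chat * (τ - τ₁)
  (t₂, s₁ + dhat / fl l chat * (fl l t₂ - fl l t₁))

lemma fl_ne_zero (l : ℝ) {x : ℝ} (hx : x ≠ 0) : fl l x ≠ 0 :=
  mul_ne_zero hx (Real.rpow_pos_of_pos (abs_pos.2 hx) _).ne'

lemma hasDerivAt_fl_ne (l : ℝ) {x : ℝ} (hx : x ≠ 0) :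
    HasDerivAt (fl l) (l * |x| ^ (l - 1)) x := by
  rcases hx.lt_or_gt with h | h
  · have hg : HasDerivAt (fun σ : ℝ => -((-σ) ^ l)) (l * (-x) ^ (l - 1)) x := by
      have h1 : HasDerivAt (fun σ : ℝ => (-σ) ^ l) (l * (-x) ^ (l - 1) * (-1)) x :=
        (Real.hasDerivAt_rpow_const (p := l) (Or.inl (by linarith : -x ≠ 0))).comp x
          (hasDerivAt_neg x)
      have h2 := h1.neg
      simp only [mul_neg, mul_one, neg_neg] at h2
      exact h2
    have heq : fl l =ᶠ[nhds x] fun σ : ℝ => -((-σ) ^ l) := by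
      filter_upwards [Iio_mem_nhds h] with σ hσ
      have hσ' : (0:ℝ) < -σ := by simpa using hσ
      rw [fl, abs_of_neg (by simpa using hσ), show l = (l-1)+1 by ring_nf,
        Real.rpow_add_one hσ'.ne']
      ring
    have := hg.congr_of_eventuallyEq heq
    rwa [abs_of_neg h]
  · have hg : HasDerivAt (fun σ : ℝ => σ ^ l) (l * x ^ (l - 1)) x :=
      Real.hasDerivAt_rpow_const (p := l) (Or.inl h.ne')
    have heq : fl l =ᶠ[nhds x] fun σ : ℝ => σ ^ l := by
      filter_upwards [Ioi_mem_nhds h] with σ hσ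
      have hσ' : (0:ℝ) < σ := hσ
      rw [fl, abs_of_pos hσ', show l = (l-1)+1 by ring_nf, Real.rpow_add_one hσ'.ne']
      ring
    have := hg.congr_of_eventuallyEq heq
    rwa [abs_of_pos h]

lemma hasDerivAt_fl (l : ℝ) (hl : 1 ≤ l) (x : ℝ) :
    HasDerivAt (fl l) (l * |x| ^ (l - 1)) x := by
  rcases eq_or_ne x 0 with rfl | hx
  · rcases eq_or_lt_of_le hl with rfl | hl'
    · have : fl 1 = id := by
        funext σ; simp [fl]
      rw [this]
      simpa using hasDerivAt_id (0:ℝ)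
    · have hval : l * |(0:ℝ)| ^ (l - 1) = 0 := by
        rw [abs_zero, Real.zero_rpow (by linarith : l - 1 ≠ 0), mul_zero]
      rw [hval, hasDerivAt_iff_tendsto_slope]
      have htend : Filter.Tendsto (fun σ : ℝ => |σ| ^ (l - 1)) (nhds 0) (nhds 0) := by
        have := (continuous_abs.tendsto (0:ℝ)).rpow_const
          (Or.inr (by linarith : (0:ℝ) ≤ l - 1))
        simpa [Real.zero_rpow (by linarith : l - 1 ≠ 0)] using this
      refine (htend.mono_left nhdsWithin_le_nhds).congr' ?_
      filter_upwards [self_mem_nhdsWithin] with σ hσ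
      have hσ : σ ≠ 0 := hσ
      rw [slope_def_field]
      simp only [fl, abs_zero, zero_mul, sub_zero]
      exact (mul_div_cancel_left₀ _ hσ).symm
  · exact hasDerivAt_fl_ne l hx

lemma fl_fl_inv (l : ℝ) (hl : l ≠ 0) (u : ℝ) : fl l (fl (1 / l) u) = u := by
  rcases eq_or_ne u 0 with rfl | hu
  · simp [fl]
  · have hu' : (0:ℝ) < |u| := abs_pos.2 hu
    have habs : |fl (1 / l) u| = |u| ^ (1 / l) := by
      rw [fl, abs_mul, abs_of_nonneg (Real.rpow_nonneg (abs_nonneg u) _)]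
      rw [show |u| * |u| ^ (1/l - 1) = |u| ^ (1:ℝ) * |u| ^ (1/l - 1) by rw [Real.rpow_one],
        ← Real.rpow_add hu']
      ring_nf
    rw [fl, habs, ← Real.rpow_mul (abs_nonneg u), fl, mul_assoc, ← Real.rpow_add hu',
      show 1/l - 1 + 1/l * (l - 1) = 0 by field_simp; ring, Real.rpow_zero, mul_one]

set_option maxHeartbeats 2000000 in
/-- Jacobian of a two-segment broken disto-line. -/
theorem jacobian_brokenMap2 (l : ℝ) (hl : 1 ≤ l) (τ : ℝ) (a₁ b₁ c d chat dhat : ℝ)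
    (ha : a₁ ≠ 0) (hc : c ≠ 0) (hchat : chat ≠ 0)
    (hΔ : distoDet l (c, d) (a₁, b₁) ≠ 0) :
    ∀ t s : ℝ, distoDet l (c, d) (t, s) ≠ 0 →
      DifferentiableAt ℝ (brokenMap2 l τ a₁ b₁ c d chat dhat) (t, s) ∧
      jac2 (brokenMap2 l τ a₁ b₁ c d chat dhat) (t, s)
        = -(|chat| ^ (1 - l) * |c| ^ (l - 1) *
            (distoDet l (chat, dhat) (a₁, b₁) / distoDet l (c, d) (a₁, b₁))) := by
  intro t s hts
  have hl0 : (0:ℝ) < l := lt_of_lt_of_le one_pos hl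
  have hlne : l ≠ 0 := ne_of_gt hl0
  have hA : fl l a₁ ≠ 0 := fl_ne_zero l ha
  set D := distoDet l (c, d) (a₁, b₁) with hD_def
  have hu0 : fl l a₁ * distoDet l (c, d) (t, s) * D⁻¹ ≠ 0 :=
    mul_ne_zero (mul_ne_zero hA hts) (inv_ne_zero hΔ)
  set pv := l * |t| ^ (l - 1) with hpv_def
  have h1 : HasFDerivAt (fun q : ℝ × ℝ => fl l q.1) (pv • ContinuousLinearMap.fst ℝ ℝ ℝ) (t, s) :=
    (hasDerivAt_fl l hl t).comp_hasFDerivAt (f := Prod.fst) (t, s) hasFDerivAt_fst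
  have hdd : HasFDerivAt (fun q : ℝ × ℝ => distoDet l (c, d) q)
      (fl l c • ContinuousLinearMap.snd ℝ ℝ ℝ - d • (pv • ContinuousLinearMap.fst ℝ ℝ ℝ)) (t, s) :=
    (hasFDerivAt_snd.const_mul (fl l c)).sub (h1.const_mul d)
  set Lu := D⁻¹ • (fl l a₁ • (fl l c • ContinuousLinearMap.snd ℝ ℝ ℝ - d • (pv • ContinuousLinearMap.fst ℝ ℝ ℝ))) with hLu_def
  have hu : HasFDerivAt (fun q : ℝ × ℝ => fl l a₁ * distoDet l (c, d) q * D⁻¹) Lu (t, s) :=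
    (hdd.const_mul (fl l a₁)).mul_const D⁻¹
  set Gv := 1 / l * |fl l a₁ * distoDet l (c, d) (t, s) * D⁻¹| ^ (1 / l - 1) with hGv_def
  have ht1 : HasFDerivAt (fun q : ℝ × ℝ => fl (1 / l) (fl l a₁ * distoDet l (c, d) q * D⁻¹)) (Gv • Lu) (t, s) :=
    (hasDerivAt_fl_ne (1 / l) hu0).comp_hasFDerivAt (f := fun q : ℝ × ℝ => fl l a₁ * distoDet l (c, d) q * D⁻¹) (t, s) hu
  have hτ : HasFDerivAt (fun q : ℝ × ℝ => (q.1 - fl (1 / l) (fl l a₁ * distoDet l (c, d) q * D⁻¹)) * c⁻¹)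
      (c⁻¹ • (ContinuousLinearMap.fst ℝ ℝ ℝ - Gv • Lu)) (t, s) :=
    (hasFDerivAt_fst.sub ht1).mul_const c⁻¹
  set Lt2 := Gv • Lu + chat • (0 - c⁻¹ • (ContinuousLinearMap.fst ℝ ℝ ℝ - Gv • Lu)) with hLt2_def
  have ht2 : HasFDerivAt (fun q : ℝ × ℝ => fl (1 / l) (fl l a₁ * distoDet l (c, d) q * D⁻¹) + chat * (τ - (q.1 - fl (1 / l) (fl l a₁ * distoDet l (c, d) q * D⁻¹)) * c⁻¹)) Lt2 (t, s) :=
    ht1.add (((hasFDerivAt_const τ ((t, s) : ℝ × ℝ)).sub hτ).const_mul chat)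
  set qv := l * |fl (1 / l) (fl l a₁ * distoDet l (c, d) (t, s) * D⁻¹) + chat * (τ - (t - fl (1 / l) (fl l a₁ * distoDet l (c, d) (t, s) * D⁻¹)) * c⁻¹)| ^ (l - 1) with hqv_def
  have hft2 : HasFDerivAt (fun q : ℝ × ℝ => fl l (fl (1 / l) (fl l a₁ * distoDet l (c, d) q * D⁻¹) + chat * (τ - (q.1 - fl (1 / l) (fl l a₁ * distoDet l (c, d) q * D⁻¹)) * c⁻¹))) (qv • Lt2) (t, s) :=
    (hasDerivAt_fl l hl (fl (1 / l) (fl l a₁ * distoDet l (c, d) (t, s) * D⁻¹) + chat * (τ - (t - fl (1 / l) (fl l a₁ * distoDet l (c, d) (t, s) * D⁻¹)) * c⁻¹))).comp_hasFDerivAt (f := fun q : ℝ × ℝ => fl (1 / l) (fl l a₁ * distoDet l (c, d) q * D⁻¹) + chat * (τ - (q.1 - fl (1 / l) (fl l a₁ * distoDet l (c, d) q * D⁻¹)) * c⁻¹)) (t, s) ht2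
  set Ls := ContinuousLinearMap.snd ℝ ℝ ℝ + (d * (fl l c)⁻¹) • (Lu - pv • ContinuousLinearMap.fst ℝ ℝ ℝ)
      + (dhat * (fl l chat)⁻¹) • (qv • Lt2 - Lu) with hLs_def
  have hs2 : HasFDerivAt (fun q : ℝ × ℝ => q.2 + d * (fl l c)⁻¹ * (fl l a₁ * distoDet l (c, d) q * D⁻¹ - fl l q.1) + dhat * (fl l chat)⁻¹ * (fl l (fl (1 / l) (fl l a₁ * distoDet l (c, d) q * D⁻¹) + chat * (τ - (q.1 - fl (1 / l) (fl l a₁ * distoDet l (c, d) q * D⁻¹)) * c⁻¹)) - (fl l a₁ * distoDet l (c, d) q * D⁻¹))) Ls (t, s) :=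
    (hasFDerivAt_snd.add ((hu.sub h1).const_mul (d * (fl l c)⁻¹))).add
      ((hft2.sub hu).const_mul (dhat * (fl l chat)⁻¹))
  have hF : HasFDerivAt (fun q : ℝ × ℝ => ((fl (1 / l) (fl l a₁ * distoDet l (c, d) q * D⁻¹) + chat * (τ - (q.1 - fl (1 / l) (fl l a₁ * distoDet l (c, d) q * D⁻¹)) * c⁻¹)), (q.2 + d * (fl l c)⁻¹ * (fl l a₁ * distoDet l (c, d) q * D⁻¹ - fl l q.1) + dhat * (fl l chat)⁻¹ * (fl l (fl (1 / l) (fl l a₁ * distoDet l (c, d) q * D⁻¹) + chat * (τ - (q.1 - fl (1 / l) (fl l a₁ * distoDet l (c, d) q * D⁻¹)) * c⁻¹)) - (fl l a₁ * distoDet l (c, d) q * D⁻¹))))) (Lt2.prod Ls) (t, s) :=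
    ht2.prodMk hs2
  have hEq : brokenMap2 l τ a₁ b₁ c d chat dhat
      = fun q : ℝ × ℝ => ((fl (1 / l) (fl l a₁ * distoDet l (c, d) q * D⁻¹) + chat * (τ - (q.1 - fl (1 / l) (fl l a₁ * distoDet l (c, d) q * D⁻¹)) * c⁻¹)), (q.2 + d * (fl l c)⁻¹ * (fl l a₁ * distoDet l (c, d) q * D⁻¹ - fl l q.1) + dhat * (fl l chat)⁻¹ * (fl l (fl (1 / l) (fl l a₁ * distoDet l (c, d) q * D⁻¹) + chat * (τ - (q.1 - fl (1 / l) (fl l a₁ * distoDet l (c, d) q * D⁻¹)) * c⁻¹)) - (fl l a₁ * distoDet l (c, d) q * D⁻¹)))) := by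
    funext q
    simp only [brokenMap2]
    rw [fl_fl_inv l hlne]
    simp only [div_eq_mul_inv, ← hD_def]
  rw [hEq]
  refine ⟨hF.differentiableAt, ?_⟩
  simp only [jac2]
  rw [hF.fderiv]
  have hPpos : (0:ℝ) < |c| ^ (l - 1) := Real.rpow_pos_of_pos (abs_pos.2 hc) _
  have hQpos : (0:ℝ) < |chat| ^ (l - 1) := Real.rpow_pos_of_pos (abs_pos.2 hchat) _
  have hflc : fl l c = c * |c| ^ (l - 1) := rfl
  have hflch : fl l chat = chat * |chat| ^ (l - 1) := rfl
  have hDet2 : distoDet l (chat, dhat) (a₁, b₁)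
      = chat * |chat| ^ (l - 1) * b₁ - dhat * fl l a₁ := rfl
  have hDex : D = c * |c| ^ (l - 1) * b₁ - d * fl l a₁ := hD_def
  have hpow : |chat| ^ (1 - l) = (|chat| ^ (l - 1))⁻¹ := by
    rw [show (1 - l) = -(l - 1) by ring, Real.rpow_neg (abs_nonneg chat)]
  have hD' : c * |c| ^ (l - 1) * b₁ - d * fl l a₁ ≠ 0 := by rw [← hDex]; exact hΔ
  simp only [hLt2_def, hLs_def, hLu_def, ContinuousLinearMap.prod_apply,
    ContinuousLinearMap.add_apply, ContinuousLinearMap.sub_apply,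
    ContinuousLinearMap.smul_apply, ContinuousLinearMap.zero_apply,
    ContinuousLinearMap.coe_fst', ContinuousLinearMap.coe_snd', smul_eq_mul]
  rw [hpow, hflc, hflch, hDet2, hDex]
  field_simp
  ring

end
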